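/- Consider the portfolio selection loss f(x, y) = −xᵀy on 𝒳 × ℝ^d. Suppose the support of Y is all of ℝ^d, i.e. ℙ(Y ∈ U) > 0 for every nonempty open U ⊆ ℝ^d, and suppose there exist x₁, x₂ ∈ 𝒳 that are linearly independent. Then every set R with R_𝒳(β) ⊆ R ⊆ ℝ^d satisfies the β-aggregation condition: for every x ∈ 𝒳 and every z' < F_x⁻¹(β), ℙ(Y ∈ {y : z' < −xᵀy ≤ F_x⁻¹(β)} ∩ R) > 0. -/

import Mathlib

open MeasureTheory Set Matrix

lemma dot_continuous {d : ℕ} (x : Fin d → ℝ) :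
    Continuous fun y : Fin d → ℝ => x ⬝ᵥ y := by
  unfold dotProduct
  exact continuous_finset_sum _ fun i _ => continuous_const.mul (continuous_apply i)

lemma dot_self_pos {d : ℕ} {x : Fin d → ℝ} (hx : x ≠ 0) : 0 < x ⬝ᵥ x := by
  have h1 : x ⬝ᵥ x ≠ 0 := fun h => hx (dotProduct_self_eq_zero.mp h)
  have h2 : 0 ≤ x ⬝ᵥ x := Finset.sum_nonneg fun i _ => mul_self_nonneg _
  exact lt_of_le_of_ne h2 (Ne.symm h1)

lemma single_solve {d : ℕ} {x : Fin d → ℝ} (hx : x ≠ 0) (a : ℝ) :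
    ∃ y : Fin d → ℝ, x ⬝ᵥ y = a := by
  refine ⟨(a / (x ⬝ᵥ x)) • x, ?_⟩
  rw [dotProduct_smul, smul_eq_mul]
  field_simp [ne_of_gt (dot_self_pos hx)]

lemma pair_solve {d : ℕ} {x x' : Fin d → ℝ}
    (h : ∀ s t : ℝ, s • x + t • x' = 0 → s = 0 ∧ t = 0) (a b : ℝ) :
    ∃ y : Fin d → ℝ, x ⬝ᵥ y = a ∧ x' ⬝ᵥ y = b := by
  have hx : x ≠ 0 := by
    intro h0
    rcases h 1 0 (by simp [h0]) with ⟨h1, _⟩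
    norm_num at h1
  have hxx : 0 < x ⬝ᵥ x := dot_self_pos hx
  set c : ℝ := (x ⬝ᵥ x') / (x ⬝ᵥ x) with hc
  set w : Fin d → ℝ := x' - c • x with hw
  have hw0 : w ≠ 0 := by
    intro h0
    have hx'c : x' = c • x := sub_eq_zero.mp h0
    rcases h c (-1) (by rw [hx'c]; module) with ⟨_, h2⟩
    norm_num at h2
  have hxw : x ⬝ᵥ w = 0 := by
    rw [hw, dotProduct_sub, dotProduct_smul, smul_eq_mul, hc]
    field_simp
    ring
  have hww : 0 < w ⬝ᵥ w := dot_self_pos hw0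
  have hx'w : x' ⬝ᵥ w = w ⬝ᵥ w := by
    have : w ⬝ᵥ w = x' ⬝ᵥ w - c * (x ⬝ᵥ w) := by
      rw [hw, sub_dotProduct, smul_dotProduct, smul_eq_mul]
    rw [this, hxw]; ring
  refine ⟨(a / (x ⬝ᵥ x)) • x + ((b - (a / (x ⬝ᵥ x)) * (x' ⬝ᵥ x)) / (w ⬝ᵥ w)) • w, ?_, ?_⟩
  · rw [dotProduct_add, dotProduct_smul, dotProduct_smul, hxw, smul_eq_mul, smul_eq_mul]
    field_simp
    ring
  · rw [dotProduct_add, dotProduct_smul, dotProduct_smul, hx'w, smul_eq_mul, smul_eq_mul]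
    field_simp
    ring

/-- For the portfolio selection loss `f(x,y) = −xᵀy`, if the support of `Y` is
all of ℝ^d and 𝒳 contains two linearly independent portfolios, then every set `R` containing
the risk region `R_𝒳(β)` satisfies the β-aggregation condition. -/
theorem stmt_10 {d : ℕ} {Ω : Type*} [MeasurableSpace Ω]
    (ℙ : Measure Ω) [IsProbabilityMeasure ℙ]
    (Y : Ω → (Fin d → ℝ)) (hY : Measurable Y)
    (𝒳 : Set (Fin d → ℝ))
    (β : ℝ) (hβ0 : 0 < β) (hβ1 : β < 1)
    -- distribution function and quantile of the loss −xᵀY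
    (F : (Fin d → ℝ) → ℝ → ℝ)
    (hF : ∀ x z, F x z = (ℙ {ω | -(x ⬝ᵥ Y ω) ≤ z}).toReal)
    (q : (Fin d → ℝ) → ℝ)
    (hq : ∀ x, q x = sInf {z : ℝ | β ≤ F x z})
    -- the support of Y is all of ℝ^d
    (hsupp : ∀ U : Set (Fin d → ℝ), IsOpen U → U.Nonempty → 0 < ℙ (Y ⁻¹' U))
    -- two linearly independent feasible portfolios
    (x₁ x₂ : Fin d → ℝ) (hx₁ : x₁ ∈ 𝒳) (hx₂ : x₂ ∈ 𝒳)
    (hli : LinearIndependent ℝ ![x₁, x₂])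
    -- any set R containing the risk region R_𝒳(β)
    (R : Set (Fin d → ℝ))
    (hRX : (⋃ x ∈ 𝒳, {y : Fin d → ℝ | q x ≤ -(x ⬝ᵥ y)}) ⊆ R) :
    ∀ x ∈ 𝒳, ∀ z' < q x,
      0 < ℙ {ω | Y ω ∈ {y : Fin d → ℝ | z' < -(x ⬝ᵥ y) ∧ -(x ⬝ᵥ y) ≤ q x} ∩ R} := by
  have hx₁0 : x₁ ≠ 0 := by
    have := hli.ne_zero 0
    simpa using this
  rw [LinearIndependent.pair_iff] at hli
  intro x hx z' hz'
  by_cases hx0 : x = 0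
  · -- x = 0 : then q x = 0 and the loss constraint is trivial
    subst hx0
    have hF0 : ∀ z : ℝ, F 0 z = if 0 ≤ z then 1 else 0 := by
      intro z
      rw [hF]
      by_cases h0z : (0 : ℝ) ≤ z
      · have : {ω | -((0 : Fin d → ℝ) ⬝ᵥ Y ω) ≤ z} = Set.univ := by
          ext ω; simp [h0z]
        simp [this, h0z]
      · have : {ω | -((0 : Fin d → ℝ) ⬝ᵥ Y ω) ≤ z} = (∅ : Set Ω) := by
          ext ω; simp [h0z]
        simp [this, h0z]
    have hq0 : q 0 = 0 := by
      rw [hq]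
      have hset : {z : ℝ | β ≤ F 0 z} = Set.Ici (0 : ℝ) := by
        ext z
        simp only [mem_setOf_eq, mem_Ici, hF0]
        by_cases h0z : (0 : ℝ) ≤ z
        · simp [h0z]; linarith
        · simp [h0z]
          linarith
      rw [hset, csInf_Ici]
    rw [hq0] at hz' ⊢
    -- the target set contains Y ⁻¹' {y | q x₁ < -(x₁ ⬝ᵥ y)}
    set U : Set (Fin d → ℝ) := {y | q x₁ < -(x₁ ⬝ᵥ y)} with hU
    have hUopen : IsOpen U := by
      have : U = (fun y => -(x₁ ⬝ᵥ y)) ⁻¹' Set.Ioi (q x₁) := rfl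
      rw [this]
      exact (isOpen_Ioi).preimage (dot_continuous x₁).neg
    have hUne : U.Nonempty := by
      obtain ⟨y, hy⟩ := single_solve hx₁0 (-(q x₁ + 1))
      exact ⟨y, by simp [hU, hy]⟩
    have hsub : Y ⁻¹' U ⊆
        {ω | Y ω ∈ {y : Fin d → ℝ | z' < -((0 : Fin d → ℝ) ⬝ᵥ y) ∧
            -((0 : Fin d → ℝ) ⬝ᵥ y) ≤ (0:ℝ)} ∩ R} := by
      intro ω hω
      constructor
      · simp only [mem_setOf_eq, zero_dotProduct, neg_zero]
        exact ⟨hz', le_refl 0⟩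
      · apply hRX
        refine Set.mem_iUnion.mpr ⟨x₁, Set.mem_iUnion.mpr ⟨hx₁, ?_⟩⟩
        exact le_of_lt (show q x₁ < -(x₁ ⬝ᵥ Y ω) from hω)
    exact lt_of_lt_of_le (hsupp U hUopen hUne) (measure_mono hsub)
  · -- x ≠ 0 : find x' ∈ 𝒳 with x, x' linearly independent
    obtain ⟨x', hx'X, hP⟩ :
        ∃ x' ∈ 𝒳, ∀ s t : ℝ, s • x + t • x' = 0 → s = 0 ∧ t = 0 := by
      by_cases h1 : ∀ s t : ℝ, s • x + t • x₁ = 0 → s = 0 ∧ t = 0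
      · exact ⟨x₁, hx₁, h1⟩
      · push_neg at h1
        obtain ⟨s, t, hst, hne⟩ := h1
        have ht : t ≠ 0 := by
          intro ht0
          subst ht0
          simp only [zero_smul, add_zero, smul_eq_zero] at hst
          rcases hst with hs | hx0'
          · exact hne hs rfl
          · exact hx0 hx0'
        have hs : s ≠ 0 := by
          intro hs0
          subst hs0
          simp only [zero_smul, zero_add, smul_eq_zero] at hst
          rcases hst with ht0 | hx10
          · exact ht ht0
          · exact hx₁0 hx10
        -- x = (-t/s) • x₁
        have hxeq : x = (-t / s) • x₁ := by
          have h1 : s • x = -(t • x₁) := by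
            rw [eq_neg_iff_add_eq_zero]; exact hst
          have h2 : x = s⁻¹ • (s • x) := by
            rw [smul_smul, inv_mul_cancel₀ hs, one_smul]
          rw [h2, h1, smul_neg, smul_smul, neg_div, neg_smul, div_eq_inv_mul]
        refine ⟨x₂, hx₂, ?_⟩
        intro s' t' h'
        rw [hxeq, smul_smul] at h'
        obtain ⟨ha, hb⟩ := hli _ _ h'
        refine ⟨?_, hb⟩
        have hts : -t / s ≠ 0 := by
          simp only [ne_eq, div_eq_zero_iff, neg_eq_zero]
          push_neg
          exact ⟨ht, hs⟩
        exact (mul_eq_zero.mp ha).resolve_right hts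
    -- build a nonempty open set inside the target set
    set m : ℝ := (z' + q x) / 2 with hm
    obtain ⟨y₀, hy1, hy2⟩ := pair_solve hP (-m) (-(q x' + 1))
    set U : Set (Fin d → ℝ) :=
      {y | z' < -(x ⬝ᵥ y)} ∩ {y | -(x ⬝ᵥ y) < q x} ∩ {y | q x' < -(x' ⬝ᵥ y)} with hU
    have hUopen : IsOpen U := by
      refine IsOpen.inter (IsOpen.inter ?_ ?_) ?_
      · exact (isOpen_Ioi).preimage (dot_continuous x).neg
      · exact (isOpen_Iio).preimage (dot_continuous x).neg
      · exact (isOpen_Ioi).preimage (dot_continuous x').neg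
    have hUne : U.Nonempty := by
      refine ⟨y₀, ⟨⟨?_, ?_⟩, ?_⟩⟩
      · simp only [mem_setOf_eq, hy1, neg_neg]; rw [hm]; linarith
      · simp only [mem_setOf_eq, hy1, neg_neg]; rw [hm]; linarith
      · simp only [mem_setOf_eq, hy2, neg_neg]; linarith
    have hsub : Y ⁻¹' U ⊆
        {ω | Y ω ∈ {y : Fin d → ℝ | z' < -(x ⬝ᵥ y) ∧ -(x ⬝ᵥ y) ≤ q x} ∩ R} := by
      intro ω hω
      obtain ⟨⟨h1, h2⟩, h3⟩ := hω
      constructor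
      · exact ⟨h1, le_of_lt h2⟩
      · apply hRX
        refine Set.mem_iUnion.mpr ⟨x', Set.mem_iUnion.mpr ⟨hx'X, ?_⟩⟩
        exact le_of_lt (show q x' < -(x' ⬝ᵥ Y ω) from h3)
    exact lt_of_lt_of_le (hsupp U hUopen hUne) (measure_mono hsub)
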